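/- Let U ⊆ ℂ be open, let F, G : U → ℂ be holomorphic, let x(u+iv) = (Re h₁, −Im h₁, Re h₃) with h₁' = F, h₃' = −F·G, and let z₀ ∈ U satisfy F(z₀) ≠ 0. For every v = (v₁,v₂) ∈ ℝ² the second fundamental form satisfies h₁₁v₁² + 2h₁₂v₁v₂ + h₂₂v₂² = −Re[F(z₀)G'(z₀)(v₁ + iv₂)²]. Consequently, a nonzero tangent vector v₁x_u + v₂x_v points to an asymptotic direction of the minimal surface at z₀ if and only if F(z₀)G'(z₀)(v₁ + iv₂)² is purely imaginary. -/

import Mathlib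

noncomputable section

/-- Partial derivative of a map on ℂ ≅ ℝ² in the u-direction (real direction 1). -/
def du {E : Type*} [NormedAddCommGroup E] [NormedSpace ℝ E]
    (f : ℂ → E) : ℂ → E := fun z => fderiv ℝ f z 1

/-- Partial derivative of a map on ℂ ≅ ℝ² in the v-direction (direction i). -/
def dv {E : Type*} [NormedAddCommGroup E] [NormedSpace ℝ E]
    (f : ℂ → E) : ℂ → E := fun z => fderiv ℝ f z Complex.I

/-- The degenerate simply isotropic inner product on ℝ³: ⟨u,v⟩ = u₁v₁ + u₂v₂. -/
def isoInner (a b : ℝ × ℝ × ℝ) : ℝ := a.1 * b.1 + a.2.1 * b.2.1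

/-- The Euclidean dot product on ℝ³. -/
def dot3 (a b : ℝ × ℝ × ℝ) : ℝ := a.1 * b.1 + a.2.1 * b.2.1 + a.2.2 * b.2.2

/-- The Euclidean cross product on ℝ³. -/
def cross3 (a b : ℝ × ℝ × ℝ) : ℝ × ℝ × ℝ :=
  (a.2.1 * b.2.2 - a.2.2 * b.2.1, a.2.2 * b.1 - a.1 * b.2.2, a.1 * b.2.1 - a.2.1 * b.1)

/-- First fundamental form coefficients (isotropic metric) of x : ℂ → ℝ³. -/
def g11 (x : ℂ → ℝ × ℝ × ℝ) (z : ℂ) : ℝ := isoInner (du x z) (du x z)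
def g12 (x : ℂ → ℝ × ℝ × ℝ) (z : ℂ) : ℝ := isoInner (du x z) (dv x z)
def g22 (x : ℂ → ℝ × ℝ × ℝ) (z : ℂ) : ℝ := isoInner (dv x z) (dv x z)

/-- The minimal normal: the unique vector of the form (n₁,n₂,1) Euclidean-orthogonal to
x_u and x_v (obtained by normalizing the cross product so its third component is 1). -/
def Nm (x : ℂ → ℝ × ℝ × ℝ) (z : ℂ) : ℝ × ℝ × ℝ :=
  ((cross3 (du x z) (dv x z)).1 / (cross3 (du x z) (dv x z)).2.2,
   (cross3 (du x z) (dv x z)).2.1 / (cross3 (du x z) (dv x z)).2.2, 1)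

/-- Second fundamental form coefficients with respect to the minimal normal. -/
def h11 (x : ℂ → ℝ × ℝ × ℝ) (z : ℂ) : ℝ := dot3 (du (du x) z) (Nm x z)
def h12 (x : ℂ → ℝ × ℝ × ℝ) (z : ℂ) : ℝ := dot3 (du (dv x) z) (Nm x z)
def h22 (x : ℂ → ℝ × ℝ × ℝ) (z : ℂ) : ℝ := dot3 (dv (dv x) z) (Nm x z)

/-- The isotropic Gaussian curvature. -/
def Kcurv (x : ℂ → ℝ × ℝ × ℝ) (z : ℂ) : ℝ :=
  (h11 x z * h22 x z - (h12 x z) ^ 2) / (g11 x z * g22 x z - (g12 x z) ^ 2)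

/-- The isotropic mean curvature. -/
def meanH (x : ℂ → ℝ × ℝ × ℝ) (z : ℂ) : ℝ :=
  (g11 x z * h22 x z - 2 * g12 x z * h12 x z + g22 x z * h11 x z) /
    (2 * (g11 x z * g22 x z - (g12 x z) ^ 2))

/-- For the Weierstrass data φ = (F, iF, −FG) and z₀ with F(z₀) ≠ 0, the second
fundamental form satisfies II(v,v) = h₁₁v₁² + 2h₁₂v₁v₂ + h₂₂v₂²
= −Re[F(z₀)G'(z₀)(v₁ + iv₂)²] for every v = (v₁,v₂) ∈ ℝ²; consequently a nonzero
tangent vector v₁x_u + v₂x_v points to an asymptotic direction iff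
F(z₀)G'(z₀)(v₁ + iv₂)² is purely imaginary. -/
lemma key (p q : ℂ → ℂ) (c d : ℂ) (z : ℂ)
    (Hp : HasDerivAt p c z) (Hq : HasDerivAt q d z) (w : ℂ) :
    fderiv ℝ (fun t => ((p t).re, -(p t).im, (q t).re)) z w
      = ((c * w).re, -(c * w).im, (d * w).re) := by
  have A := Hp.hasFDerivAt.restrictScalars ℝ
  have B := Hq.hasFDerivAt.restrictScalars ℝ
  have h1 := (Complex.reCLM.hasFDerivAt.comp z A)
  have h2 := ((-Complex.imCLM).hasFDerivAt.comp z A)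
  have h3 := (Complex.reCLM.hasFDerivAt.comp z B)
  have H := HasFDerivAt.prodMk h1 (HasFDerivAt.prodMk h2 h3)
  have := H.fderiv
  rw [show (fun t => ((p t).re, -(p t).im, (q t).re)) =
      (fun t => ((Complex.reCLM ∘ p) t, ((-Complex.imCLM) ∘ p) t, (Complex.reCLM ∘ q) t)) from rfl]
  rw [this]
  simp [mul_comm, Complex.smul_re, Complex.smul_im]

theorem stmt18 (U : Set ℂ) (hU : IsOpen U) (F G h₁ h₃ : ℂ → ℂ)
    (hF : DifferentiableOn ℂ F U) (hG : DifferentiableOn ℂ G U)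
    (hh₁ : ∀ z ∈ U, HasDerivAt h₁ (F z) z)
    (hh₃ : ∀ z ∈ U, HasDerivAt h₃ (-(F z * G z)) z)
    (z₀ : ℂ) (hz₀ : z₀ ∈ U) (hFz₀ : F z₀ ≠ 0) :
    ∀ v₁ v₂ : ℝ,
      (h11 (fun w => ((h₁ w).re, -(h₁ w).im, (h₃ w).re)) z₀ * v₁ ^ 2 +
          2 * h12 (fun w => ((h₁ w).re, -(h₁ w).im, (h₃ w).re)) z₀ * v₁ * v₂ +
          h22 (fun w => ((h₁ w).re, -(h₁ w).im, (h₃ w).re)) z₀ * v₂ ^ 2 =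
        -(F z₀ * deriv G z₀ * ((v₁ : ℂ) + (v₂ : ℂ) * Complex.I) ^ 2).re) ∧
      ((v₁, v₂) ≠ (0, 0) →
        (h11 (fun w => ((h₁ w).re, -(h₁ w).im, (h₃ w).re)) z₀ * v₁ ^ 2 +
            2 * h12 (fun w => ((h₁ w).re, -(h₁ w).im, (h₃ w).re)) z₀ * v₁ * v₂ +
            h22 (fun w => ((h₁ w).re, -(h₁ w).im, (h₃ w).re)) z₀ * v₂ ^ 2 = 0 ↔
          (F z₀ * deriv G z₀ * ((v₁ : ℂ) + (v₂ : ℂ) * Complex.I) ^ 2).re = 0)) := by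
  set x : ℂ → ℝ × ℝ × ℝ := fun w => ((h₁ w).re, -(h₁ w).im, (h₃ w).re) with hx
  have hUnhds : U ∈ nhds z₀ := hU.mem_nhds hz₀
  have hF' : HasDerivAt F (deriv F z₀) z₀ := (hF.differentiableAt hUnhds).hasDerivAt
  have hG' : HasDerivAt G (deriv G z₀) z₀ := (hG.differentiableAt hUnhds).hasDerivAt
  have hFG : HasDerivAt (fun z => -(F z * G z))
      (-(deriv F z₀ * G z₀ + F z₀ * deriv G z₀)) z₀ := (hF'.mul hG').neg
  -- first derivatives on U
  have hdu : ∀ z ∈ U, du x z = (((F z) * 1).re, -((F z) * 1).im, ((-(F z * G z)) * 1).re) := by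
    intro z hz
    exact key h₁ h₃ (F z) (-(F z * G z)) z (hh₁ z hz) (hh₃ z hz) 1
  have hdv : ∀ z ∈ U, dv x z = (((F z) * Complex.I).re, -((F z) * Complex.I).im,
      ((-(F z * G z)) * Complex.I).re) := by
    intro z hz
    exact key h₁ h₃ (F z) (-(F z * G z)) z (hh₁ z hz) (hh₃ z hz) Complex.I
  have hduE : du x =ᶠ[nhds z₀]
      (fun z => (((F z) * 1).re, -((F z) * 1).im, ((-(F z * G z)) * 1).re)) :=
    Filter.eventuallyEq_of_mem hUnhds hdu
  have hdvE : dv x =ᶠ[nhds z₀]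
      (fun z => (((F z) * Complex.I).re, -((F z) * Complex.I).im,
        ((-(F z * G z)) * Complex.I).re)) :=
    Filter.eventuallyEq_of_mem hUnhds hdv
  -- simplify the one-versions
  have hduE' : du x =ᶠ[nhds z₀] (fun z => ((F z).re, -(F z).im, (-(F z * G z)).re)) := by
    simpa using hduE
  have hF1 : HasDerivAt (fun z => F z * Complex.I) (deriv F z₀ * Complex.I) z₀ :=
    hF'.mul_const Complex.I
  have hFG1 : HasDerivAt (fun z => -(F z * G z) * Complex.I)
      (-(deriv F z₀ * G z₀ + F z₀ * deriv G z₀) * Complex.I) z₀ := hFG.mul_const Complex.I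
  -- second derivatives
  have hduu : du (du x) z₀ = ((deriv F z₀ * 1).re, -(deriv F z₀ * 1).im,
      ((-(deriv F z₀ * G z₀ + F z₀ * deriv G z₀)) * 1).re) := by
    show fderiv ℝ (du x) z₀ 1 = _
    rw [hduE'.fderiv_eq]
    exact key F (fun z => -(F z * G z)) _ _ z₀ hF' hFG 1
  have hduv : du (dv x) z₀ = ((deriv F z₀ * Complex.I * 1).re, -(deriv F z₀ * Complex.I * 1).im,
      ((-(deriv F z₀ * G z₀ + F z₀ * deriv G z₀)) * Complex.I * 1).re) := by
    show fderiv ℝ (dv x) z₀ 1 = _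
    rw [hdvE.fderiv_eq]
    exact key (fun z => F z * Complex.I) (fun z => -(F z * G z) * Complex.I) _ _ z₀ hF1 hFG1 1
  have hdvv : dv (dv x) z₀ = ((deriv F z₀ * Complex.I * Complex.I).re,
      -(deriv F z₀ * Complex.I * Complex.I).im,
      ((-(deriv F z₀ * G z₀ + F z₀ * deriv G z₀)) * Complex.I * Complex.I).re) := by
    show fderiv ℝ (dv x) z₀ Complex.I = _
    rw [hdvE.fderiv_eq]
    exact key (fun z => F z * Complex.I) (fun z => -(F z * G z) * Complex.I) _ _ z₀ hF1 hFG1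
      Complex.I
  have hduz : du x z₀ = ((F z₀).re, -(F z₀).im, (-(F z₀ * G z₀)).re) := by
    simpa using hdu z₀ hz₀
  have hdvz : dv x z₀ = ((F z₀ * Complex.I).re, -(F z₀ * Complex.I).im,
      (-(F z₀ * G z₀) * Complex.I).re) := hdv z₀ hz₀
  have hne : (F z₀).re ^ 2 + (F z₀).im ^ 2 ≠ 0 := by
    intro h
    apply hFz₀
    have h1 : (F z₀).re = 0 ∧ (F z₀).im = 0 := by
      constructor <;> nlinarith [sq_nonneg (F z₀).re, sq_nonneg (F z₀).im]
    exact Complex.ext h1.1 h1.2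
  intro v₁ v₂
  have hcr : cross3 (du x z₀) (dv x z₀) =
      (-(((F z₀).re ^ 2 + (F z₀).im ^ 2) * (G z₀).re),
       -(((F z₀).re ^ 2 + (F z₀).im ^ 2) * (G z₀).im),
       -((F z₀).re ^ 2 + (F z₀).im ^ 2)) := by
    rw [hduz, hdvz]
    simp only [cross3, Complex.mul_re, Complex.mul_im, Complex.neg_re, Complex.neg_im,
      Complex.I_re, Complex.I_im, Prod.mk.injEq]
    refine ⟨by ring, by ring, by ring⟩
  have hNm : Nm x z₀ = ((G z₀).re, (G z₀).im, 1) := by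
    rw [Nm, hcr]
    simp only [Prod.mk.injEq]
    refine ⟨?_, ?_, trivial⟩ <;>
      rw [div_eq_iff (neg_ne_zero.mpr hne)] <;> ring
  have hmain : h11 x z₀ * v₁ ^ 2 + 2 * h12 x z₀ * v₁ * v₂ + h22 x z₀ * v₂ ^ 2 =
      -(F z₀ * deriv G z₀ * ((v₁ : ℂ) + (v₂ : ℂ) * Complex.I) ^ 2).re := by
    rw [h11, h12, h22, hNm, hduu, hduv, hdvv]
    simp only [dot3, Complex.mul_re, Complex.mul_im, Complex.neg_re, Complex.neg_im,
      Complex.add_re, Complex.add_im, Complex.I_re, Complex.I_im, Complex.ofReal_re,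
      Complex.ofReal_im, mul_one, pow_two]
    ring
  refine ⟨hmain, fun _ => ?_⟩
  rw [hmain]
  constructor <;> intro h <;> linarith
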